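/- Let A be an abelian group and let D = {a ∈ A : for every positive integer n there exists b ∈ A with n·b = a} be its subgroup of infinitely divisible elements. Assume the quotient A/D is finite. Let B : A × A → ℚ/ℤ be a ℤ-bilinear pairing whose left kernel {x : B(x,y) = 0 for all y} and right kernel {y : B(x,y) = 0 for all x} both equal D. Let φ : A → A be an additive endomorphism and u : A → A an additive automorphism such that φ∘u = u∘φ, B(φ(x), y) = B(x, u(φ(y))) for all x, y ∈ A, and φ(D) = D. Then for all positive integers m and n and every y ∈ A with φ^n(y) = 0, one has B(x,y) = 0 for all x with φ^m(x) = 0 if and only if y ∈ φ^m(ker(φ^{n+m})). -/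

import Mathlib

open DirectSum

private lemma aux_tors_surj (k : ℕ) (hk : 0 < k) :
    ∃ g : Fin k → {u : AddCircle (1:ℚ) // k • u = 0}, Function.Surjective g := by
  have hk' : (k : ℚ) ≠ 0 := by positivity
  refine ⟨fun j : Fin k =>
      (⟨((j : ℚ) / (k : ℚ) : ℚ), by
        rw [← AddCircle.coe_nsmul, nsmul_eq_mul, mul_div_cancel₀ _ hk',
          AddCircle.coe_eq_zero_iff]
        exact ⟨(j : ℤ), by rw [zsmul_eq_mul, mul_one]; push_cast; ring⟩⟩ :
        {u : AddCircle (1:ℚ) // k • u = 0}), ?_⟩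
  rintro ⟨u, hu⟩
  obtain ⟨q, rfl⟩ := QuotientAddGroup.mk_surjective u
  rw [← AddCircle.coe_nsmul, AddCircle.coe_eq_zero_iff] at hu
  obtain ⟨z, hz⟩ := hu
  rw [zsmul_eq_mul, mul_one, nsmul_eq_mul] at hz
  have hq : q = (z : ℚ) / k := by field_simp; linarith
  have h1 : 0 ≤ z % (k:ℤ) := Int.emod_nonneg z (by exact_mod_cast hk.ne')
  have h2 : z % (k:ℤ) < k := Int.emod_lt_of_pos z (by exact_mod_cast hk)
  refine ⟨⟨(z % k).toNat, by omega⟩, ?_⟩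
  ext
  simp only
  rw [QuotientAddGroup.eq_iff_sub_mem, hq]
  refine ⟨-(z / k), ?_⟩
  show (-(z / (k:ℤ))) • (1:ℚ) = _
  rw [zsmul_eq_mul, mul_one]
  have hze : (z : ℤ) % k = z - k * (z / k) := Int.emod_def z k
  have h3 : (((z % (k:ℤ)).toNat : ℚ)) = ((z % (k:ℤ) : ℤ) : ℚ) := by
    exact_mod_cast congrArg (fun t : ℤ => (t : ℚ)) (Int.toNat_of_nonneg h1)
  rw [h3, hze]
  push_cast
  field_simp
  ring

private lemma aux_tors_card (k : ℕ) (hk : 0 < k) :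
    Nat.card {u : AddCircle (1:ℚ) // k • u = 0} ≤ k := by
  obtain ⟨g, hg⟩ := aux_tors_surj k hk
  exact (Nat.card_le_card_of_surjective g hg).trans (by simp)


private lemma aux_zmod_dual_card (k : ℕ) (hk : 0 < k) :
    Nat.card (ZMod k →+ AddCircle (1:ℚ)) ≤ k := by
  haveI : NeZero k := ⟨hk.ne'⟩
  have hinj : Function.Injective (fun f : ZMod k →+ AddCircle (1:ℚ) =>
      (⟨f 1, by rw [← map_nsmul]; norm_num [show (k : ZMod k) = 0 from ZMod.natCast_self k,
        show k • (1 : ZMod k) = (k : ZMod k) by simp]⟩ :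
        {u : AddCircle (1:ℚ) // k • u = 0})) := by
    intro f g h
    simp only [Subtype.mk.injEq] at h
    ext x
    have hx : x = x.val • (1 : ZMod k) := by
      rw [nsmul_eq_mul, mul_one, ZMod.natCast_val, ZMod.cast_id]
    rw [hx, map_nsmul, map_nsmul, h]
  obtain ⟨g, hg⟩ := aux_tors_surj k hk
  haveI : Finite {u : AddCircle (1:ℚ) // k • u = 0} := Finite.of_surjective g hg
  refine (Nat.card_le_card_of_injective _ hinj).trans ?_
  exact (Nat.card_le_card_of_surjective g hg).trans (by simp)

private lemma aux_dual_card (H : Type*) [AddCommGroup H] [Finite H] :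
    Nat.card (H →+ AddCircle (1:ℚ)) ≤ Nat.card H := by
  classical
  obtain ⟨ι, hι, n, hn, ⟨e⟩⟩ := AddCommGroup.equiv_directSum_zmod_of_finite' H
  -- precompose with e.symm
  have e1 : (H →+ AddCircle (1:ℚ)) ≃ ((DirectSum ι fun i => ZMod (n i)) →+ AddCircle (1:ℚ)) :=
    { toFun := fun f => f.comp e.symm.toAddMonoidHom
      invFun := fun f => f.comp e.toAddMonoidHom
      left_inv := fun f => by ext x; simp
      right_inv := fun f => by ext x; simp }
  have e2 : ((DirectSum ι fun i => ZMod (n i)) →+ AddCircle (1:ℚ)) ≃ (∀ i, ZMod (n i) →+ AddCircle (1:ℚ)) :=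
    (DFinsupp.liftAddHom (β := fun i => ZMod (n i)) (γ := AddCircle (1:ℚ))).symm.toEquiv
  rw [Nat.card_congr (e1.trans e2), Nat.card_pi, Nat.card_congr e.toEquiv]
  have : Nat.card (DirectSum ι fun i => ZMod (n i)) = ∏ i, n i := by
    have e3 : (DirectSum ι fun i => ZMod (n i)) ≃ ∀ i, ZMod (n i) := DFinsupp.equivFunOnFintype
    rw [Nat.card_congr e3, Nat.card_pi]
    congr 1; ext i; simp [Nat.card_eq_fintype_card]
  rw [this]
  exact Finset.prod_le_prod (fun i _ => Nat.zero_le _)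
    (fun i _ => aux_zmod_dual_card (n i) (Nat.lt_of_lt_of_le Nat.zero_lt_one (hn i).le))

private lemma aux_zmod_dual_finite (k : ℕ) (hk : 0 < k) :
    Finite (ZMod k →+ AddCircle (1:ℚ)) := by
  haveI : NeZero k := ⟨hk.ne'⟩
  obtain ⟨g, hg⟩ := aux_tors_surj k hk
  haveI : Finite {u : AddCircle (1:ℚ) // k • u = 0} := Finite.of_surjective g hg
  refine Finite.of_injective (fun f : ZMod k →+ AddCircle (1:ℚ) =>
      (⟨f 1, by rw [← map_nsmul]; norm_num [show (k : ZMod k) = 0 from ZMod.natCast_self k,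
        show k • (1 : ZMod k) = (k : ZMod k) by simp]⟩ :
        {u : AddCircle (1:ℚ) // k • u = 0})) ?_
  intro f g h
  simp only [Subtype.mk.injEq] at h
  ext x
  have hx : x = x.val • (1 : ZMod k) := by
    rw [nsmul_eq_mul, mul_one, ZMod.natCast_val, ZMod.cast_id]
  rw [hx, map_nsmul, map_nsmul, h]

private lemma aux_dual_finite (H : Type*) [AddCommGroup H] [Finite H] :
    Finite (H →+ AddCircle (1:ℚ)) := by
  classical
  obtain ⟨ι, hι, n, hn, ⟨e⟩⟩ := AddCommGroup.equiv_directSum_zmod_of_finite' H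
  have e1 : (H →+ AddCircle (1:ℚ)) ≃ ((DirectSum ι fun i => ZMod (n i)) →+ AddCircle (1:ℚ)) :=
    { toFun := fun f => f.comp e.symm.toAddMonoidHom
      invFun := fun f => f.comp e.toAddMonoidHom
      left_inv := fun f => by ext x; simp
      right_inv := fun f => by ext x; simp }
  have e2 : ((DirectSum ι fun i => ZMod (n i)) →+ AddCircle (1:ℚ)) ≃
      (∀ i, ZMod (n i) →+ AddCircle (1:ℚ)) :=
    (DFinsupp.liftAddHom (β := fun i => ZMod (n i)) (γ := AddCircle (1:ℚ))).symm.toEquiv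
  haveI : ∀ i, Finite (ZMod (n i) →+ AddCircle (1:ℚ)) := fun i =>
    aux_zmod_dual_finite (n i) (Nat.lt_of_lt_of_le Nat.zero_lt_one (hn i).le)
  exact Finite.of_equiv _ (e1.trans e2).symm


private lemma aux_fin_ann {G : Type*} [AddCommGroup G] [Finite G]
    (b : G →+ (G →+ AddCircle (1:ℚ)))
    (hl : ∀ x : G, b x = 0 → x = 0)
    (T S : AddMonoid.End G)
    (hST : ∀ x, S (T x) = T (S x))
    (hTS : ∀ x z, b x (T z) = b (T x) (S z))
    (m : ℕ) (y : G)
    (hy : ∀ x, (T ^ m) x = 0 → b x y = 0) :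
    ∃ z, (T ^ m) z = y := by
  classical
  have happ : ∀ (F F' : AddMonoid.End G) (x : G), (F * F') x = F (F' x) := fun _ _ _ => rfl
  -- iterated adjunction
  have hC : S * T = T * S := DFunLike.ext _ _ hST
  have hswap : ∀ (j : ℕ) (w : G), (S ^ j) (T w) = T ((S ^ j) w) := by
    intro j w
    have hc : Commute S T := hC
    have h2 := (hc.pow_left j).eq
    rw [← happ, h2, happ]
  have hiter : ∀ j : ℕ, ∀ x z, b x ((T ^ j) z) = b ((T ^ j) x) ((S ^ j) z) := by
    intro j
    induction j with
    | zero => intro x z; simp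
    | succ j ih =>
      intro x z
      have e3 : ∀ w, T ((T ^ j) w) = (T ^ j) (T w) := fun w => by
        rw [← happ, ← happ, ← pow_succ', ← pow_succ]
      have e4 : ∀ w, S ((S ^ j) w) = (S ^ j) (S w) := fun w => by
        rw [← happ, ← happ, ← pow_succ', ← pow_succ]
      have g1 : (T ^ (j + 1)) z = (T ^ j) (T z) := by rw [pow_succ, happ]
      have g2 : (T ^ (j + 1)) x = (T ^ j) (T x) := by rw [pow_succ, happ]
      have g3 : (S ^ (j + 1)) z = (S ^ j) (S z) := by rw [pow_succ, happ]
      rw [g1, g2, g3, ih x (T z), hswap j z, hTS, e3, e4]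
  set Tm : G →+ G := ((T ^ m : AddMonoid.End G) : G →+ G) with hTm
  set K : AddSubgroup G := Tm.ker with hK
  set I : AddSubgroup G := Tm.range with hI
  -- annihilator of K
  set Ann : AddSubgroup G :=
    { carrier := {w : G | ∀ x ∈ K, b x w = 0}
      zero_mem' := fun x _ => by simp
      add_mem' := fun ha hb x hx => by rw [map_add, ha x hx, hb x hx, add_zero]
      neg_mem' := fun ha x hx => by rw [map_neg, ha x hx, neg_zero] } with hAnn
  have hIA : I ≤ Ann := by
    rintro w ⟨z, rfl⟩ x hx
    have : b x (Tm z) = b (Tm x) ((S ^ m) z) := hiter m x z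
    rw [this, show Tm x = 0 from hx, map_zero]
    rfl
  -- injection K → dual (G ⧸ Ann)
  have hKdual : Nat.card K ≤ Nat.card (G ⧸ Ann) := by
    have hmap : ∀ x : K, ∀ w ∈ Ann, b (x : G) w = 0 := fun x w hw => hw x x.2
    let ρ : K → ((G ⧸ Ann) →+ AddCircle (1:ℚ)) := fun x =>
      QuotientAddGroup.lift Ann (b (x : G)) (hmap x)
    have hρ : Function.Injective ρ := by
      intro x x' h
      have : ∀ w : G, b (x : G) w = b (x' : G) w := by
        intro w
        have := congrArg (fun f => f ((w : G) : G ⧸ Ann)) h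
        exact this
      have hxx : b ((x : G) - (x' : G)) = 0 := by
        ext w
        simp [map_sub, this w, sub_self]
      have := hl _ hxx
      exact Subtype.ext (by rwa [sub_eq_zero] at this)
    haveI := aux_dual_finite (G ⧸ Ann)
    exact (Nat.card_le_card_of_injective ρ hρ).trans (aux_dual_card (G ⧸ Ann))
  -- counting
  have hcard1 : Nat.card G = Nat.card (G ⧸ Ann) * Nat.card Ann :=
    AddSubgroup.card_eq_card_quotient_mul_card_addSubgroup Ann
  have hcard2 : Nat.card G = Nat.card (G ⧸ K) * Nat.card K :=
    AddSubgroup.card_eq_card_quotient_mul_card_addSubgroup K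
  have hquotI : Nat.card (G ⧸ K) = Nat.card I :=
    Nat.card_congr (QuotientAddGroup.quotientKerEquivRange Tm).toEquiv
  have hpos : 0 < Nat.card K := Nat.card_pos
  have hpos2 : 0 < Nat.card (G ⧸ Ann) := Nat.card_pos
  have hAnnI : Nat.card Ann ≤ Nat.card I := by
    have h1 : Nat.card (G ⧸ Ann) * Nat.card Ann = Nat.card I * Nat.card K := by
      rw [← hcard1, hcard2, hquotI]
    nlinarith [hKdual, hpos, hpos2, h1]
  have hIAnn : (I : Set G) = (Ann : Set G) := by
    refine Set.eq_of_subset_of_ncard_le hIA ?_ (Set.toFinite _)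
    rw [← Nat.card_coe_set_eq, ← Nat.card_coe_set_eq]
    exact hAnnI
  have hyI : y ∈ I := by
    rw [← SetLike.mem_coe, hIAnn]
    exact fun x hx => hy x hx
  exact hyI

/-- Generic content of Proposition 5.1: perfection of the induced pairing. Here `D` is
the subgroup of infinitely divisible elements of `A`, the quotient `A ⧸ D` is finite,
`B` is a bilinear pairing into `ℚ/ℤ` with left and right kernels equal to `D`, and
`φ` is an endomorphism with a commuting automorphism `u` satisfying the adjunction
`B (φ x) y = B x (u (φ y))` and `φ(D) = D`. Then for `y ∈ ker (φ^n)`, `y` annihilates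
`ker (φ^m)` iff `y ∈ φ^m (ker (φ^(n+m)))`. -/
theorem stmt_5 {A : Type*} [AddCommGroup A] (D : AddSubgroup A)
    (hD : (D : Set A) = {a : A | ∀ n : ℕ, 0 < n → ∃ b : A, n • b = a})
    (hfin : Finite (A ⧸ D))
    (B : A → A → AddCircle (1 : ℚ))
    (hBl : ∀ x x' y : A, B (x + x') y = B x y + B x' y)
    (hBr : ∀ x y y' : A, B x (y + y') = B x y + B x y')
    (hlk : {x : A | ∀ y : A, B x y = 0} = (D : Set A))
    (hrk : {y : A | ∀ x : A, B x y = 0} = (D : Set A))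
    (φ : AddMonoid.End A) (u : A ≃+ A)
    (hcomm : ∀ x : A, φ (u x) = u (φ x))
    (hadj : ∀ x y : A, B (φ x) y = B x (u (φ y)))
    (hφD : ⇑φ '' (D : Set A) = (D : Set A))
    (m n : ℕ) (hm : 0 < m) (hn : 0 < n) (y : A) (hy : (φ ^ n) y = 0) :
    (∀ x : A, (φ ^ m) x = 0 → B x y = 0) ↔
      ∃ z : A, (φ ^ (n + m)) z = 0 ∧ (φ ^ m) z = y := by
  classical
  have happ : ∀ (F F' : AddMonoid.End A) (x : A), (F * F') x = F (F' x) := fun _ _ _ => rfl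
  -- basic pairing facts
  have hB0l : ∀ w : A, B 0 w = 0 := fun w => by
    have := hBl 0 0 w; rw [add_zero] at this
    exact (right_eq_add.mp this).symm ▸ rfl
  have hB0r : ∀ w : A, B w 0 = 0 := fun w => by
    have := hBr w 0 0; rw [add_zero] at this
    exact (right_eq_add.mp this).symm ▸ rfl
  have hDl : ∀ d ∈ D, ∀ w : A, B d w = 0 := fun d hd w => by
    have : d ∈ {x : A | ∀ y : A, B x y = 0} := by rw [hlk]; exact hd
    exact this w
  have hDr : ∀ d ∈ D, ∀ w : A, B w d = 0 := fun d hd w => by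
    have : d ∈ {y : A | ∀ x : A, B x y = 0} := by rw [hrk]; exact hd
    exact this w
  have hBsubl : ∀ x x' w : A, B (x - x') w = B x w - B x' w := fun x x' w => by
    have := hBl (x - x') x' w; rw [sub_add_cancel] at this; rw [this]; abel
  -- commutation of u.symm with φ
  have hsymm : ∀ x : A, u.symm (φ x) = φ (u.symm x) := fun x => by
    have := hcomm (u.symm x)
    rw [u.apply_symm_apply] at this
    rw [this, u.symm_apply_apply]
  -- moved adjunction
  have hmove : ∀ x w : A, B x (φ w) = B (φ x) (u.symm w) := fun x w => by
    rw [hadj x (u.symm w), ← hsymm, u.apply_symm_apply]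
  -- every endomorphism preserves D
  have hchar : ∀ (f : A →+ A), ∀ a ∈ D, f a ∈ D := by
    intro f a ha
    have ha' : a ∈ {a : A | ∀ n : ℕ, 0 < n → ∃ b : A, n • b = a} := by rw [← hD]; exact ha
    have : f a ∈ {a : A | ∀ n : ℕ, 0 < n → ∃ b : A, n • b = a} := by
      intro k hk
      obtain ⟨b, hb⟩ := ha' k hk
      exact ⟨f b, by rw [← map_nsmul, hb]⟩
    rw [← SetLike.mem_coe, hD]; exact this
  -- iterated image of D under φ
  have himg : ∀ j : ℕ, ∀ d ∈ D, ∃ d' ∈ D, (φ ^ j) d' = d := by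
    intro j
    induction j with
    | zero => exact fun d hd => ⟨d, hd, rfl⟩
    | succ j ih =>
      intro d hd
      have : d ∈ ⇑φ '' (D : Set A) := by rw [hφD]; exact hd
      obtain ⟨e, he, hφe⟩ := this
      obtain ⟨d', hd', hd''⟩ := ih e he
      exact ⟨d', hd', by rw [pow_succ', happ, hd'', hφe]⟩
  -- iterated move
  have hVj : ∀ (j : ℕ) (w : A), (⇑u.symm)^[j] (φ w) = φ ((⇑u.symm)^[j] w) := by
    intro j
    induction j with
    | zero => intro w; simp
    | succ j ih =>
      intro w
      rw [Function.iterate_succ_apply, Function.iterate_succ_apply, hsymm, ih]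
  have hmovej : ∀ j : ℕ, ∀ x w : A, B x ((φ ^ j) w) = B ((φ ^ j) x) ((⇑u.symm)^[j] w) := by
    intro j
    induction j with
    | zero => intro x w; simp
    | succ j ih =>
      intro x w
      have hφswap : ∀ x : A, φ ((φ ^ j) x) = (φ ^ j) (φ x) := fun x => by
        rw [← happ, ← pow_succ', pow_succ, happ]
      have g1 : (φ ^ (j+1)) w = (φ ^ j) (φ w) := by rw [pow_succ, happ]
      have g2 : (φ ^ (j+1)) x = (φ ^ j) (φ x) := by rw [pow_succ, happ]
      rw [g1, g2, ih x (φ w), hVj j w, hmove, Function.iterate_succ_apply', hφswap]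
  constructor
  · -- hard direction
    intro hyp
    -- quotient setup
    set Abar := A ⧸ D with hAbar
    have hφle : D ≤ D.comap φ := fun a ha => hchar φ a ha
    have hsle : D ≤ D.comap (u.symm : A →+ A) := fun a ha => hchar _ a ha
    set T : AddMonoid.End Abar := (QuotientAddGroup.map D D φ hφle : Abar →+ Abar) with hT
    set S : AddMonoid.End Abar :=
      (QuotientAddGroup.map D D (u.symm : A →+ A) hsle : Abar →+ Abar) with hS
    have hTmk : ∀ x : A, T ((x : Abar)) = ((φ x : A) : Abar) := fun x => rfl
    have hSmk : ∀ x : A, S ((x : Abar)) = ((u.symm x : A) : Abar) := fun x => rfl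
    have hTj : ∀ j : ℕ, ∀ x : A, (T ^ j) ((x : Abar)) = (((φ ^ j) x : A) : Abar) := by
      intro j
      induction j with
      | zero => intro x; rfl
      | succ j ih =>
        intro x
        have h1 : (T ^ (j+1)) ((x : Abar)) = (T ^ j) (T ((x : Abar))) := by
          rw [pow_succ]; rfl
        rw [h1, hTmk, ih, pow_succ]; rfl
    -- the pairing on the quotient
    have hliftr : ∀ x : A, ∀ d ∈ D, AddMonoidHom.mk' (fun w => B x w) (fun a b => hBr x a b) d = 0 :=
      fun x d hd => hDr d hd x
    set ℓ : A → (Abar →+ AddCircle (1:ℚ)) := fun x =>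
      QuotientAddGroup.lift D (AddMonoidHom.mk' (fun w => B x w) (fun a b => hBr x a b))
        (hliftr x) with hℓ
    have hℓapp : ∀ x w : A, ℓ x ((w : Abar)) = B x w := fun x w => rfl
    have hℓadd : ∀ x x' : A, ℓ (x + x') = ℓ x + ℓ x' := by
      intro x x'
      ext w
      show ℓ (x + x') ((w : Abar)) = (ℓ x + ℓ x') ((w : Abar))
      rw [AddMonoidHom.add_apply, hℓapp, hℓapp, hℓapp, hBl]
    set L : A →+ (Abar →+ AddCircle (1:ℚ)) := AddMonoidHom.mk' ℓ hℓadd with hL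
    have hLD : ∀ d ∈ D, L d = 0 := by
      intro d hd
      ext w
      show L d ((w : Abar)) = (0 : Abar →+ AddCircle (1:ℚ)) ((w : Abar))
      rw [AddMonoidHom.zero_apply]
      exact hDl d hd w
    set Lbar : Abar →+ (Abar →+ AddCircle (1:ℚ)) := QuotientAddGroup.lift D L hLD with hLbar
    have hLapp : ∀ x w : A, Lbar ((x : Abar)) ((w : Abar)) = B x w := fun x w => rfl
    -- hypotheses of aux_fin_ann
    have hl : ∀ x : Abar, Lbar x = 0 → x = 0 := by
      intro x
      refine QuotientAddGroup.induction_on x ?_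
      intro x' hx'
      have hmem : x' ∈ D := by
        rw [← SetLike.mem_coe, ← hlk]
        intro w
        have h2 := congrArg (fun f : Abar →+ AddCircle (1:ℚ) => f ((w : Abar))) hx'
        simpa only [hLapp, AddMonoidHom.zero_apply] using h2
      exact (QuotientAddGroup.eq_zero_iff x').mpr hmem
    have hST : ∀ x : Abar, S (T x) = T (S x) := by
      intro x
      refine QuotientAddGroup.induction_on x ?_
      intro x'
      rw [hTmk, hSmk, hSmk, hTmk]
      exact congrArg _ (hsymm x')
    have hTS : ∀ x z : Abar, Lbar x (T z) = Lbar (T x) (S z) := by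
      intro x z
      refine QuotientAddGroup.induction_on x ?_
      intro x'
      refine QuotientAddGroup.induction_on z ?_
      intro z'
      rw [hTmk, hSmk, hTmk, hLapp, hLapp]
      exact hmove x' z'
    have hyann : ∀ x : Abar, (T ^ m) x = 0 → Lbar x ((y : Abar)) = 0 := by
      intro x
      refine QuotientAddGroup.induction_on x ?_
      intro x' hx'
      rw [hTj m x'] at hx'
      have hmem : (φ ^ m) x' ∈ D := (QuotientAddGroup.eq_zero_iff _).mp hx'
      obtain ⟨d, hd, hdm⟩ := himg m _ hmem
      have h0 : (φ ^ m) (x' - d) = 0 := by rw [map_sub, hdm, sub_self]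
      have h3 := hyp _ h0
      rw [hBsubl, hDl d hd y, sub_zero] at h3
      rw [hLapp]
      exact h3
    obtain ⟨zbar, hzbar⟩ := aux_fin_ann Lbar hl T S hST hTS m ((y : Abar)) hyann
    obtain ⟨z, rfl⟩ := QuotientAddGroup.mk_surjective zbar
    rw [hTj m z] at hzbar
    have hmem : (φ ^ m) z - y ∈ D := (QuotientAddGroup.eq_iff_sub_mem).mp hzbar
    obtain ⟨d', hd', hdm'⟩ := himg m _ hmem
    refine ⟨z - d', ?_, ?_⟩
    · have h2 : (φ ^ m) (z - d') = y := by rw [map_sub, hdm', sub_sub_cancel]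
      have h4 : (φ ^ (n+m)) (z - d') = (φ ^ n) ((φ ^ m) (z - d')) := by rw [pow_add, happ]
      rw [h4, h2, hy]
    · rw [map_sub, hdm', sub_sub_cancel]
  · -- easy direction
    rintro ⟨z, hz1, hz2⟩ x hx
    rw [← hz2, hmovej m x z, hx, hB0l]
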